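/- arXiv:2106.06408 — 5 statements merged into one kernel-verified Lean document; each statement's English description precedes it below -/
import Mathlib

section
/- For integers n ≥ 1 and 0 ≤ m ≤ n, the ratio of Vandermonde determinants Δ_n(1,2,...,m̂+1,...,n+1) / Δ_n(1,2,...,n) equals the binomial coefficient n!/(m!(n-m)!), where the numerator is the Vandermonde determinant of the sequence (1,2,...,n+1) with the entry m+1 omitted. -/
open Finset

/-- Vandermonde determinant `Δ_n(z) = ∏_{i<j} (z_j - z_i)`. -/
noncomputable def vanDet {n : ℕ} (z : Fin n → ℝ) : ℝ :=
  ∏ i : Fin n, ∏ j ∈ Finset.Ioi i, (z j - z i)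

/-- The tuple `(1, 2, ..., n+1)` with the entry `m+1` removed. -/
def eTuple (n m : ℕ) : Fin n → ℝ := fun i => if (i : ℕ) < m then (i : ℝ) + 1 else (i : ℝ) + 2

/-- Convert a product over `Ioi i` in `Fin n` to a product over `Ico (i+1) n` in `ℕ`. -/
lemma prod_Ioi_fin {M : Type*} [CommMonoid M] {n : ℕ} (i : Fin n) (F : ℕ → M) :
    ∏ j ∈ Finset.Ioi i, F (j : ℕ) = ∏ j ∈ Finset.Ico ((i : ℕ) + 1) n, F j := by
  refine Finset.prod_nbij (fun j => (j : ℕ)) ?_ ?_ ?_ ?_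
  · intro j hj
    simp only [Finset.mem_Ioi] at hj
    simp only [Finset.mem_Ico]
    exact ⟨hj, j.isLt⟩
  · intro a ha b hb hab
    exact Fin.ext hab
  · intro k hk
    simp only [Finset.coe_Ico, Set.mem_Ico] at hk
    exact ⟨⟨k, hk.2⟩, by simpa [Fin.lt_def] using hk.1, rfl⟩
  · intro a ha; rfl

/-- Express a Vandermonde determinant whose differences are natural numbers as a cast. -/
lemma vanDet_cast {n : ℕ} (z : Fin n → ℝ) (f : ℕ → ℕ → ℕ)
    (h : ∀ i j : Fin n, i < j → z j - z i = (f (i : ℕ) (j : ℕ) : ℝ)) :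
    vanDet z = ((∏ i ∈ range n, ∏ j ∈ Finset.Ico (i + 1) n, f i j : ℕ) : ℝ) := by
  rw [vanDet]
  push_cast
  rw [Finset.prod_range (fun i => ∏ j ∈ Finset.Ico (i + 1) n, (f i j : ℝ))]
  refine Finset.prod_congr rfl ?_
  intro i _
  rw [← prod_Ioi_fin i (fun j => (f (i : ℕ) j : ℝ))]
  refine Finset.prod_congr rfl ?_
  intro j hj
  exact h i j (Finset.mem_Ioi.1 hj)

/-- Telescoping identity. -/
lemma tele (p L : ℕ) :
    (∏ k ∈ range L, (p + k + 1)) * p = (∏ k ∈ range L, (p + k)) * (p + L) := by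
  induction L with
  | zero => simp
  | succ L ih =>
    rw [prod_range_succ, prod_range_succ, mul_right_comm, ih]
    ring

lemma step {n m : ℕ} (hm : m ≤ n) (i : ℕ) (him : i < m) :
    (∏ j ∈ Finset.Ico m n, (j - i + 1)) * (m - i)
      = (∏ j ∈ Finset.Ico m n, (j - i)) * (n - i) := by
  rw [Finset.prod_Ico_eq_prod_range, Finset.prod_Ico_eq_prod_range]
  have h1 : ∀ k, m + k - i + 1 = (m - i) + k + 1 := fun k => by omega
  have h2 : ∀ k, m + k - i = (m - i) + k := fun k => by omega
  simp_rw [h1, h2]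
  rw [tele (m - i) (n - m)]
  congr 1
  omega

lemma inner_eq {n m : ℕ} (hm : m ≤ n) (i : ℕ) :
    (∏ j ∈ Finset.Ico (i + 1) n, (if i < m ∧ m ≤ j then j - i + 1 else j - i))
        * (if i < m then m - i else 1)
      = (∏ j ∈ Finset.Ico (i + 1) n, (j - i)) * (if i < m then n - i else 1) := by
  by_cases him : i < m
  · simp only [him, true_and, if_true]
    rw [← Finset.prod_Ico_consecutive _ (show i + 1 ≤ m from him) hm,
        ← Finset.prod_Ico_consecutive (fun j => j - i) (show i + 1 ≤ m from him) hm]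
    have e1 : ∀ j ∈ Finset.Ico (i + 1) m, (if m ≤ j then j - i + 1 else j - i) = j - i := by
      intro j hj
      simp only [Finset.mem_Ico] at hj
      rw [if_neg (by omega)]
    have e2 : ∀ j ∈ Finset.Ico m n, (if m ≤ j then j - i + 1 else j - i) = j - i + 1 := by
      intro j hj
      simp only [Finset.mem_Ico] at hj
      rw [if_pos hj.1]
    rw [Finset.prod_congr rfl e1, Finset.prod_congr rfl e2, mul_assoc, mul_assoc,
      step hm i him]
  · have : ∀ j ∈ Finset.Ico (i + 1) n, (if i < m ∧ m ≤ j then j - i + 1 else j - i) = j - i := by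
      intro j hj
      rw [if_neg (by tauto)]
    rw [Finset.prod_congr rfl this, if_neg him, if_neg him]

/-- The key combinatorial identity over ℕ. -/
lemma key (n m : ℕ) (hm : m ≤ n) :
    (∏ i ∈ range n, ∏ j ∈ Finset.Ico (i + 1) n,
        (if i < m ∧ m ≤ j then j - i + 1 else j - i)) * (m.factorial * (n - m).factorial)
      = (∏ i ∈ range n, ∏ j ∈ Finset.Ico (i + 1) n, (j - i)) * n.factorial := by
  have hc : (∏ i ∈ range n, (if i < m then m - i else 1)) = m.factorial := by
    rw [← Finset.prod_range_mul_prod_Ico _ hm]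
    have h1 : ∀ i ∈ range m, (if i < m then m - i else 1) = m - i := by
      intro i hi; rw [if_pos (Finset.mem_range.1 hi)]
    have h2 : ∀ i ∈ Finset.Ico m n, (if i < m then m - i else 1) = 1 := by
      intro i hi; rw [if_neg (by simp only [Finset.mem_Ico] at hi; omega)]
    rw [Finset.prod_congr rfl h1, Finset.prod_congr rfl h2, Finset.prod_const_one, mul_one]
    rw [← Finset.prod_range_reflect]
    rw [← Finset.prod_range_add_one_eq_factorial m]
    refine Finset.prod_congr rfl ?_
    intro j hj
    have := Finset.mem_range.1 hj
    omega
  have hd : (∏ i ∈ range n, (if i < m then n - i else 1)) = n.descFactorial m := by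
    rw [← Finset.prod_range_mul_prod_Ico _ hm]
    have h1 : ∀ i ∈ range m, (if i < m then n - i else 1) = n - i := by
      intro i hi; rw [if_pos (Finset.mem_range.1 hi)]
    have h2 : ∀ i ∈ Finset.Ico m n, (if i < m then n - i else 1) = 1 := by
      intro i hi; rw [if_neg (by simp only [Finset.mem_Ico] at hi; omega)]
    rw [Finset.prod_congr rfl h1, Finset.prod_congr rfl h2, Finset.prod_const_one, mul_one,
      Nat.descFactorial_eq_prod_range]
  have hmain : (∏ i ∈ range n, ∏ j ∈ Finset.Ico (i + 1) n,
        (if i < m ∧ m ≤ j then j - i + 1 else j - i)) * m.factorial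
      = (∏ i ∈ range n, ∏ j ∈ Finset.Ico (i + 1) n, (j - i)) * n.descFactorial m := by
    rw [← hc, ← hd, ← Finset.prod_mul_distrib, ← Finset.prod_mul_distrib]
    exact Finset.prod_congr rfl fun i _ => inner_eq hm i
  calc (∏ i ∈ range n, ∏ j ∈ Finset.Ico (i + 1) n,
        (if i < m ∧ m ≤ j then j - i + 1 else j - i)) * (m.factorial * (n - m).factorial)
      = ((∏ i ∈ range n, ∏ j ∈ Finset.Ico (i + 1) n,
        (if i < m ∧ m ≤ j then j - i + 1 else j - i)) * m.factorial) * (n - m).factorial := by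
        ring
    _ = ((∏ i ∈ range n, ∏ j ∈ Finset.Ico (i + 1) n, (j - i)) * n.descFactorial m)
          * (n - m).factorial := by rw [hmain]
    _ = (∏ i ∈ range n, ∏ j ∈ Finset.Ico (i + 1) n, (j - i))
          * ((n - m).factorial * n.descFactorial m) := by ring
    _ = (∏ i ∈ range n, ∏ j ∈ Finset.Ico (i + 1) n, (j - i)) * n.factorial := by
        rw [Nat.factorial_mul_descFactorial hm]

theorem vandermonde_ratio (n m : ℕ) (hn : 1 ≤ n) (hm : m ≤ n) :
    vanDet (eTuple n m) / vanDet (fun i : Fin n => (i : ℝ) + 1)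
      = (n.factorial : ℝ) / (m.factorial * (n - m).factorial) := by
  set Ne : ℕ := ∏ i ∈ range n, ∏ j ∈ Finset.Ico (i + 1) n,
      (if i < m ∧ m ≤ j then j - i + 1 else j - i) with hNe
  set Nb : ℕ := ∏ i ∈ range n, ∏ j ∈ Finset.Ico (i + 1) n, (j - i) with hNb
  have hE : vanDet (eTuple n m) = (Ne : ℝ) := by
    apply vanDet_cast
    intro i j hij
    have hij' : (i : ℕ) < (j : ℕ) := hij
    simp only [eTuple]
    by_cases h1 : (i : ℕ) < m <;> by_cases h2 : m ≤ (j : ℕ)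
    · rw [if_pos h1, if_neg (by omega), if_pos ⟨h1, h2⟩]
      have : ((j : ℕ) - (i : ℕ) + 1 : ℕ) = ((j : ℕ) : ℝ) - ((i : ℕ) : ℝ) + 1 := by
        push_cast [Nat.cast_sub (le_of_lt hij')]; ring
      rw [this]; ring
    · rw [if_pos h1, if_pos (by omega), if_neg (by tauto)]
      have : ((j : ℕ) - (i : ℕ) : ℕ) = ((j : ℕ) : ℝ) - ((i : ℕ) : ℝ) := by
        push_cast [Nat.cast_sub (le_of_lt hij')]; ring
      rw [this]; ring
    · rw [if_neg h1, if_neg (by omega), if_neg (by tauto)]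
      have : ((j : ℕ) - (i : ℕ) : ℕ) = ((j : ℕ) : ℝ) - ((i : ℕ) : ℝ) := by
        push_cast [Nat.cast_sub (le_of_lt hij')]; ring
      rw [this]; ring
    · omega
  have hB : vanDet (fun i : Fin n => (i : ℝ) + 1) = (Nb : ℝ) := by
    apply vanDet_cast
    intro i j hij
    have hij' : (i : ℕ) < (j : ℕ) := hij
    have : ((j : ℕ) - (i : ℕ) : ℕ) = ((j : ℕ) : ℝ) - ((i : ℕ) : ℝ) := by
      push_cast [Nat.cast_sub (le_of_lt hij')]; ring
    rw [this]; ring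
  have hNbpos : 0 < Nb := by
    rw [hNb]
    apply Finset.prod_pos
    intro i _
    apply Finset.prod_pos
    intro j hj
    have := (Finset.mem_Ico.1 hj).1
    omega
  have hkey := key n m hm
  rw [hE, hB]
  rw [div_eq_div_iff (by exact_mod_cast hNbpos.ne')
    (by positivity)]
  exact_mod_cast hkey.trans (Nat.mul_comm _ _)
end

section
/- For positive reals z_0, ..., z_{n-1}, the determinant of the n×n matrix whose (i,j) entry is Γ(z_j + i) (with i, j running from 0 to n-1) equals (∏_{j=0}^{n-1} Γ(z_j)) · Δ_n(z), where Δ_n(z) = ∏_{0 ≤ i < j ≤ n-1}(z_j - z_i). -/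
open Finset

lemma gamma_add_nat (z : ℝ) (hz : 0 < z) (i : ℕ) :
    Real.Gamma (z + i) = Real.Gamma z * (ascPochhammer ℝ i).eval z := by
  induction i with
  | zero => simp
  | succ n ih =>
      have h1 : z + (n + 1 : ℕ) = (z + n) + 1 := by push_cast; ring
      have h2 : (z + (n : ℝ)) ≠ 0 := by positivity
      rw [h1, Real.Gamma_add_one h2, ih, ascPochhammer_succ_right]
      simp [Polynomial.eval_mul]
      ring

theorem det_gamma (n : ℕ) (z : Fin n → ℝ) (hz : ∀ j, 0 < z j) :
    Matrix.det (Matrix.of fun i j : Fin n => Real.Gamma (z j + (i : ℕ)))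
      = (∏ j : Fin n, Real.Gamma (z j)) * vanDet z := by
  have hM : (Matrix.of fun i j : Fin n => Real.Gamma (z j + (i : ℕ)))
      = Matrix.of fun i j : Fin n =>
        Real.Gamma (z j) * (ascPochhammer ℝ (i : ℕ)).eval (z j) := by
    ext i j
    exact gamma_add_nat (z j) (hz j) i
  rw [hM, Matrix.det_mul_row (fun j => Real.Gamma (z j))
    (fun i j : Fin n => (ascPochhammer ℝ (i : ℕ)).eval (z j))]
  congr 1
  have key : (Matrix.vandermonde z).det
      = Matrix.det (Matrix.of fun i j : Fin n => (ascPochhammer ℝ (j : ℕ)).eval (z i)) :=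
    Matrix.det_eval_matrixOfPolynomials_eq_det_vandermonde z
      (fun i : Fin n => ascPochhammer ℝ (i : ℕ))
      (fun i => ascPochhammer_natDegree (S := ℝ) i) (fun i => monic_ascPochhammer _ _)
  calc Matrix.det (fun i j : Fin n => (ascPochhammer ℝ (i : ℕ)).eval (z j))
      = Matrix.det (Matrix.transpose
          (Matrix.of fun i j : Fin n => (ascPochhammer ℝ (j : ℕ)).eval (z i))) := rfl
    _ = Matrix.det (Matrix.of fun i j : Fin n => (ascPochhammer ℝ (j : ℕ)).eval (z i)) :=
        Matrix.det_transpose _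
    _ = (Matrix.vandermonde z).det := key.symm
    _ = vanDet z := by rw [Matrix.det_vandermonde]; rfl
end

section
/- For real numbers z_0, ..., z_{n-1} and w such that all quantities are defined and nonzero, det[(z_j)_i / (z_j + w)_i]_{i,j=0}^{n-1} = (∏_{j=0}^{n-1} (w)_j / (z_j + w)_{n-1}) · Δ_n(z), where (a)_k denotes the Pochhammer symbol (rising factorial). -/
open Finset

/-- Rising factorial (Pochhammer symbol) `(a)_k = a(a+1)⋯(a+k-1)`. -/
noncomputable def poch (a : ℝ) (k : ℕ) : ℝ := (ascPochhammer ℝ k).eval a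

open Polynomial Matrix

lemma poch_zero (a : ℝ) : poch a 0 = 1 := by simp [poch]

lemma poch_succ (a : ℝ) (m : ℕ) : poch a (m + 1) = poch a m * (a + m) :=
  ascPochhammer_succ_eval m a

lemma poch_succ_left (a : ℝ) (m : ℕ) : poch a (m + 1) = a * poch (a + 1) m := by
  simp [poch, ascPochhammer_succ_left, eval_comp]

lemma poch_add_eval (a : ℝ) (i k : ℕ) : poch a (i + k) = poch a i * poch (a + i) k := by
  have h := congrArg (Polynomial.eval a) (ascPochhammer_mul (S := ℝ) i k)
  simpa [poch, eval_comp] using h.symm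

lemma poch_ne_zero (a : ℝ) (m : ℕ) (h : ∀ k < m, a + (k : ℝ) ≠ 0) : poch a m ≠ 0 := by
  induction m with
  | zero => simp [poch_zero]
  | succ m ih =>
      rw [poch_succ]
      exact mul_ne_zero (ih fun k hk => h k (Nat.lt_succ_of_lt hk)) (h m (Nat.lt_succ_self m))

lemma poch_eq_zero (a : ℝ) {k m : ℕ} (hk : k < m) (ha : a + (k : ℝ) = 0) : poch a m = 0 := by
  have hm : m = (k + 1) + (m - (k + 1)) := by omega
  rw [hm, poch_add_eval, poch_succ, ha]
  ring

lemma poch_neg (j : ℕ) : poch (-(j : ℝ)) j = ∏ k ∈ Finset.range j, ((k : ℝ) - (j : ℝ)) := by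
  induction j with
  | zero => simp [poch_zero]
  | succ j ih =>
      rw [poch_succ_left, Finset.prod_range_succ']
      have h1 : (-(↑(j + 1) : ℝ)) + 1 = -(j : ℝ) := by push_cast; ring
      have h2 : ∀ k : ℕ, ((k + 1 : ℕ) : ℝ) - ((j + 1 : ℕ) : ℝ) = (k : ℝ) - (j : ℝ) := by
        intro k; push_cast; ring
      rw [h1, ih]
      simp only [h2]
      push_cast
      ring

/-- The polynomial whose evaluation at `x` is `(x)_i (x+w+i)_{n-1-i}`. -/
noncomputable def Pp (n : ℕ) (w : ℝ) (i : ℕ) : ℝ[X] :=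
  ascPochhammer ℝ i * (ascPochhammer ℝ (n - 1 - i)).comp (X + Polynomial.C (w + (i : ℝ)))

lemma Pp_eval (n : ℕ) (w : ℝ) (i : ℕ) (x : ℝ) :
    (Pp n w i).eval x = poch x i * poch (x + w + i) (n - 1 - i) := by
  simp [Pp, poch, eval_comp, add_assoc]

lemma Pp_natDegree_lt (n : ℕ) (w : ℝ) (i : ℕ) (hi : i < n) : (Pp n w i).natDegree < n := by
  have h1 : (Pp n w i).natDegree ≤ i + ((ascPochhammer ℝ (n - 1 - i)).comp
      (X + Polynomial.C (w + (i : ℝ)))).natDegree := by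
    simpa [Pp] using natDegree_mul_le (p := ascPochhammer ℝ i)
      (q := (ascPochhammer ℝ (n - 1 - i)).comp (X + Polynomial.C (w + (i : ℝ))))
  have h2 : ((ascPochhammer ℝ (n - 1 - i)).comp
      (X + Polynomial.C (w + (i : ℝ)))).natDegree = n - 1 - i := by
    rw [natDegree_comp, ascPochhammer_natDegree, natDegree_X_add_C, mul_one]
  omega

/-- Coefficient matrix of the polynomials `Pp`. -/
noncomputable def Cmat (n : ℕ) (w : ℝ) : Matrix (Fin n) (Fin n) ℝ :=
  Matrix.of fun i k : Fin n => (Pp n w i).coeff k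

lemma detA (n : ℕ) (w : ℝ) (z : Fin n → ℝ) :
    Matrix.det (Matrix.of fun i j : Fin n =>
        poch (z j) (i : ℕ) * poch (z j + w + i) (n - 1 - i))
      = Matrix.det (Cmat n w) * vanDet z := by
  have hfac : (Matrix.of fun i j : Fin n =>
      poch (z j) (i : ℕ) * poch (z j + w + i) (n - 1 - i))
      = Cmat n w * (Matrix.vandermonde z)ᵀ := by
    ext i j
    have hdeg : (Pp n w (i : ℕ)).natDegree < n := Pp_natDegree_lt n w i i.isLt
    have := Polynomial.eval_eq_sum_range' hdeg (z j)
    rw [Matrix.mul_apply]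
    simp only [Cmat, Matrix.transpose_apply, Matrix.vandermonde, Matrix.of_apply]
    rw [← Pp_eval n w (i : ℕ) (z j), this, ← Fin.sum_univ_eq_sum_range]
  rw [hfac, Matrix.det_mul, Matrix.det_transpose, Matrix.det_vandermonde, vanDet]

lemma detC (n : ℕ) (w : ℝ) : Matrix.det (Cmat n w) = ∏ j : Fin n, poch w (j : ℕ) := by
  set zs : Fin n → ℝ := fun j => -((j : ℕ) : ℝ) with hzs
  have hA := detA n w zs
  -- the specialized matrix is upper triangular
  have htri : (Matrix.of fun i j : Fin n =>
      poch (zs j) (i : ℕ) * poch (zs j + w + i) (n - 1 - i)).BlockTriangular id := by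
    intro i j hij
    simp only [id_eq] at hij
    have h0 : poch (zs j) (i : ℕ) = 0 := by
      apply poch_eq_zero _ (k := (j : ℕ))
      · exact hij
      · simp [hzs]
    simp [h0]
  rw [Matrix.det_of_upperTriangular htri] at hA
  -- compute the diagonal product
  have hdiag : ∏ i : Fin n, (Matrix.of fun i j : Fin n =>
      poch (zs j) (i : ℕ) * poch (zs j + w + i) (n - 1 - i)) i i
      = (∏ i : Fin n, poch (-((i : ℕ) : ℝ)) (i : ℕ)) *
        ∏ i : Fin n, poch w (n - 1 - (i : ℕ)) := by
    rw [← Finset.prod_mul_distrib]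
    apply Finset.prod_congr rfl
    intro i _
    have h : zs i + w + ((i : ℕ) : ℝ) = w := by simp only [hzs]; ring
    simp only [Matrix.of_apply, h]
    rfl
  -- the product of poch (-i) i equals vanDet zs
  have hpochprod : ∏ i : Fin n, poch (-((i : ℕ) : ℝ)) (i : ℕ) = vanDet zs := by
    rw [vanDet]
    rw [Finset.prod_comm' (s' := fun j => Finset.Iio j) (t' := Finset.univ)
      (f := fun i j => zs j - zs i)]
    · apply Finset.prod_congr rfl
      intro j _
      rw [poch_neg]
      rw [show Finset.range (j : ℕ) = (Finset.Iio j).map Fin.valEmbedding by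
        rw [Fin.map_valEmbedding_Iio, ← Nat.Iio_eq_range]]
      rw [Finset.prod_map]
      apply Finset.prod_congr rfl
      intro i _
      simp only [hzs, Fin.valEmbedding_apply]
      ring
    · intro x y
      simp [Finset.mem_Ioi, Finset.mem_Iio, and_comm]
  -- reindex the poch w product
  have hrev : ∏ i : Fin n, poch w (n - 1 - (i : ℕ)) = ∏ j : Fin n, poch w (j : ℕ) := by
    rw [← Equiv.prod_comp Fin.revPerm (fun j : Fin n => poch w (j : ℕ))]
    apply Finset.prod_congr rfl
    intro i _
    congr 1
    simp only [Fin.revPerm_apply, Fin.val_rev]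
    omega
  rw [hdiag, hpochprod, hrev] at hA
  have hvne : vanDet zs ≠ 0 := by
    rw [vanDet]
    apply Finset.prod_ne_zero_iff.mpr
    intro i _
    apply Finset.prod_ne_zero_iff.mpr
    intro j hj
    rw [Finset.mem_Ioi] at hj
    have : (i : ℕ) < (j : ℕ) := hj
    simp only [hzs]
    intro hcon
    have : ((j : ℕ) : ℝ) = ((i : ℕ) : ℝ) := by linarith
    exact absurd (Nat.cast_injective this) (by omega)
  have h2 : Matrix.det (Cmat n w) * vanDet zs
      = (∏ j : Fin n, poch w (j : ℕ)) * vanDet zs := by rw [← hA]; ring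
  exact mul_right_cancel₀ hvne h2

theorem det_pochhammer_ratio (n : ℕ) (z : Fin n → ℝ) (w : ℝ)
    (hnz : ∀ (j : Fin n) (k : ℕ), k < n → z j + w + (k : ℝ) ≠ 0) :
    Matrix.det (Matrix.of fun i j : Fin n => poch (z j) (i : ℕ) / poch (z j + w) (i : ℕ))
      = (∏ j : Fin n, poch w (j : ℕ) / poch (z j + w) (n - 1)) * vanDet z := by
  have hne : ∀ j : Fin n, ∀ m : ℕ, m ≤ n - 1 → poch (z j + w) m ≠ 0 := by
    intro j m hm
    apply poch_ne_zero
    intro k hk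
    have : z j + w + (k : ℝ) = z j + w + (k : ℝ) := rfl
    exact hnz j k (by omega)
  have key : Matrix.det (Matrix.of fun i j : Fin n =>
      poch (z j + w) (n - 1) * (poch (z j) (i : ℕ) / poch (z j + w) (i : ℕ)))
      = (∏ j : Fin n, poch (z j + w) (n - 1)) *
        Matrix.det (Matrix.of fun i j : Fin n =>
          poch (z j) (i : ℕ) / poch (z j + w) (i : ℕ)) :=
    Matrix.det_mul_row (fun j => poch (z j + w) (n - 1)) _
  have hentry : (Matrix.of fun i j : Fin n =>
      poch (z j + w) (n - 1) * (poch (z j) (i : ℕ) / poch (z j + w) (i : ℕ)))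
      = (Matrix.of fun i j : Fin n =>
        poch (z j) (i : ℕ) * poch (z j + w + i) (n - 1 - i)) := by
    ext i j
    have hi : (i : ℕ) ≤ n - 1 := by have := i.isLt; omega
    have hsplit : poch (z j + w) (n - 1)
        = poch (z j + w) (i : ℕ) * poch (z j + w + i) (n - 1 - i) := by
      rw [← poch_add_eval]
      congr 1
      omega
    have hiz : poch (z j + w) (i : ℕ) ≠ 0 := hne j i hi
    simp only [Matrix.of_apply]
    rw [hsplit]
    field_simp
  rw [hentry, detA, detC] at key
  have hDne : (∏ j : Fin n, poch (z j + w) (n - 1)) ≠ 0 :=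
    Finset.prod_ne_zero_iff.mpr fun j _ => hne j (n - 1) le_rfl
  rw [Finset.prod_div_distrib, div_mul_eq_mul_div, eq_div_iff hDne, key]
  ring
end

section
/- For positive reals z_0, ..., z_{n-1} and w > 0, the determinant of the n×n matrix with (i,j) entry B(z_j + i, w) (the Beta function, i,j from 0 to n-1) equals (∏_{j=0}^{n-1} Γ(z_j)Γ(w+j)/Γ(z_j + w + n - 1)) · Δ_n(z). -/
open Finset

/-- The Beta function `B(x,y) = Γ(x)Γ(y)/Γ(x+y)`. -/
noncomputable def betaFn (x y : ℝ) : ℝ := Real.Gamma x * Real.Gamma y / Real.Gamma (x + y)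

lemma beta_rec {x w : ℝ} (hx : 0 < x) (hw : 0 < w) :
    betaFn (x + 1) w = betaFn x w - betaFn x (w + 1) := by
  have hxw : (0:ℝ) < x + w := by linarith
  have h1 : Real.Gamma (x + 1) = x * Real.Gamma x := Real.Gamma_add_one hx.ne'
  have h2 : Real.Gamma (w + 1) = w * Real.Gamma w := Real.Gamma_add_one hw.ne'
  have h3 : Real.Gamma (x + w + 1) = (x + w) * Real.Gamma (x + w) :=
    Real.Gamma_add_one hxw.ne'
  have h4 : Real.Gamma (x + w) ≠ 0 := (Real.Gamma_pos_of_pos hxw).ne'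
  unfold betaFn
  rw [show x + 1 + w = x + w + 1 by ring, h1, h3, show x + (w + 1) = x + w + 1 by ring, h3, h2]
  field_simp
  ring

lemma beta_expand (i : ℕ) : ∀ {x w : ℝ}, 0 < x → 0 < w →
    betaFn (x + i) w = ∑ k ∈ Finset.range (i + 1),
      (i.choose k : ℝ) * ((-1) ^ k * betaFn x (w + k)) := by
  induction i with
  | zero => intro x w hx hw; simp
  | succ i ih =>
    intro x w hx hw
    have hx' : (0:ℝ) < x + i := by positivity
    have hstep : betaFn (x + (i+1 : ℕ)) w = betaFn (x + i) w - betaFn (x + i) (w + 1) := by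
      rw [show ((x : ℝ) + (i+1 : ℕ)) = (x + i) + 1 by push_cast; ring]
      exact beta_rec hx' hw
    set B : ℕ → ℝ := fun k => betaFn x (w + k) with hB
    have hB1 : ∀ k : ℕ, betaFn x (w + 1 + k) = B (k + 1) := by
      intro k; simp only [hB, Nat.cast_add, Nat.cast_one]; ring_nf
    set c' : ℕ → ℝ := fun k => if k = 0 then 0 else (i.choose (k-1) : ℝ) with hc'
    have hch : ∀ k : ℕ, ((i+1).choose k : ℝ) = (i.choose k : ℝ) + c' k := by
      intro k
      cases k with
      | zero => simp [hc']
      | succ k => simp [hc', Nat.choose_succ_succ]; ring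
    have key : ∑ k ∈ Finset.range (i + 1 + 1), ((i+1).choose k : ℝ) * ((-1) ^ k * B k)
        = (∑ k ∈ Finset.range (i + 1), (i.choose k : ℝ) * ((-1) ^ k * B k))
          - ∑ k ∈ Finset.range (i + 1), (i.choose k : ℝ) * ((-1) ^ k * B (k + 1)) := by
      simp only [hch, add_mul, Finset.sum_add_distrib]
      have h1 : ∑ k ∈ Finset.range (i + 1 + 1), (i.choose k : ℝ) * ((-1) ^ k * B k)
          = ∑ k ∈ Finset.range (i + 1), (i.choose k : ℝ) * ((-1) ^ k * B k) := by
        rw [Finset.sum_range_succ]; simp [Nat.choose_succ_self]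
      have h2 : ∑ k ∈ Finset.range (i + 1 + 1), c' k * ((-1) ^ k * B k)
          = - ∑ k ∈ Finset.range (i + 1), (i.choose k : ℝ) * ((-1) ^ k * B (k + 1)) := by
        rw [Finset.sum_range_succ' (fun k => c' k * ((-1) ^ k * B k)) (i+1)]
        have h3 : ∀ k ∈ Finset.range (i + 1), c' (k+1) * ((-1) ^ (k+1) * B (k+1))
            = -((i.choose k : ℝ) * ((-1) ^ k * B (k+1))) := by
          intro k _
          simp only [hc', Nat.succ_ne_zero, if_false, Nat.succ_sub_one, pow_succ]
          ring
        rw [Finset.sum_congr rfl h3, Finset.sum_neg_distrib]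
        simp [hc']
      rw [h1, h2]; ring
    rw [hstep, ih hx hw, ih hx (by linarith : (0:ℝ) < w + 1)]
    simp only [hB1]
    rw [key]
open Finset

lemma gamma_prod (a : ℝ) (ha : 0 < a) (k d : ℕ) :
    Real.Gamma (a + (k + d : ℕ)) = Real.Gamma (a + k) * ∏ t ∈ Finset.Ico k (k + d), (a + t) := by
  induction d with
  | zero => simp
  | succ d ih =>
    have hpos : (0:ℝ) < a + ((k + d : ℕ) : ℝ) := by
      have := Nat.cast_nonneg (α := ℝ) (k + d); linarith
    have h1 : (a + ((k + (d+1) : ℕ) : ℝ)) = (a + ((k + d : ℕ) : ℝ)) + 1 := by push_cast; ring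
    rw [h1, Real.Gamma_add_one hpos.ne', ih,
      show k + (d + 1) = (k + d) + 1 by ring,
      Finset.prod_Ico_succ_top (Nat.le_add_right _ _)]
    push_cast
    ring

theorem det_beta (n : ℕ) (z : Fin n → ℝ) (w : ℝ) (hz : ∀ j, 0 < z j) (hw : 0 < w) :
    Matrix.det (Matrix.of fun i j : Fin n => betaFn (z j + (i : ℕ)) w)
      = (∏ j : Fin n,
          Real.Gamma (z j) * Real.Gamma (w + (j : ℕ)) / Real.Gamma (z j + w + (n : ℝ) - 1))
        * vanDet z := by
  rcases Nat.eq_zero_or_pos n with hn | hn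
  · subst hn
    simp [vanDet, Matrix.det_isEmpty]
  set m := n - 1 with hm
  have hnm : n = m + 1 := (Nat.succ_pred_eq_of_pos hn).symm
  set L : Matrix (Fin n) (Fin n) ℝ := Matrix.of fun i k : Fin n => ((i:ℕ).choose (k:ℕ) : ℝ)
    with hL
  set N : Matrix (Fin n) (Fin n) ℝ :=
    Matrix.of fun k j : Fin n => (-1 : ℝ) ^ (k:ℕ) * betaFn (z j) (w + (k:ℕ)) with hN
  -- Step 1 : M = L * N and det L = 1
  have hM : (Matrix.of fun i j : Fin n => betaFn (z j + (i : ℕ)) w) = L * N := by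
    ext i j
    rw [Matrix.mul_apply]
    simp only [hL, hN, Matrix.of_apply]
    rw [beta_expand (i:ℕ) (hz j) hw]
    rw [Fin.sum_univ_eq_sum_range
      (fun k => ((i:ℕ).choose k : ℝ) * ((-1 : ℝ) ^ k * betaFn (z j) (w + k))) n]
    refine Finset.sum_subset ?_ ?_
    · exact Finset.range_subset_range.mpr i.isLt
    · intro x _ hx
      have : (i:ℕ) < x := by simpa [Nat.lt_succ_iff, not_le] using hx
      simp [Nat.choose_eq_zero_of_lt this]
  have hdetL : L.det = 1 := by
    have htri : L.BlockTriangular OrderDual.toDual := by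
      intro i j hij
      have hij' : (i:ℕ) < (j:ℕ) := hij
      simp [hL, Nat.choose_eq_zero_of_lt hij']
    rw [Matrix.det_of_lowerTriangular L htri]
    simp [hL]
  rw [hM, Matrix.det_mul, hdetL, one_mul]
  -- Step 2 : reverse rows and columns
  rw [← Matrix.det_submatrix_equiv_self Fin.revPerm N]
  -- Step 3 : factor rows and columns
  have key : ∀ (k j : Fin n), betaFn (z j) (w + (k:ℕ))
      = Real.Gamma (w + (k:ℕ)) * ((Real.Gamma (z j) / Real.Gamma (z j + w + (m:ℕ)))
          * ∏ t ∈ Finset.Ico (k:ℕ) m, (z j + w + (t:ℕ))) := by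
    intro k j
    have hk : (k:ℕ) ≤ m := by have := k.isLt; omega
    have hzw : (0:ℝ) < z j + w := by have := hz j; linarith
    have hg := gamma_prod (z j + w) hzw (k:ℕ) (m - (k:ℕ))
    rw [Nat.add_sub_cancel' hk] at hg
    have hGk : (0:ℝ) < Real.Gamma (z j + w + (k:ℕ)) := by
      apply Real.Gamma_pos_of_pos
      have := Nat.cast_nonneg (α := ℝ) (k:ℕ); linarith
    have hP : (0:ℝ) < ∏ t ∈ Finset.Ico (k:ℕ) m, (z j + w + (t:ℕ)) := by
      apply Finset.prod_pos
      intro t _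
      have := Nat.cast_nonneg (α := ℝ) t; linarith
    unfold betaFn
    rw [show z j + (w + (k:ℕ)) = z j + w + (k:ℕ) by ring, hg]
    field_simp
  -- Step 3 : factor rows and columns
  set v : Fin n → ℝ := fun j => z (Fin.rev j) + w with hv
  set Q : Matrix (Fin n) (Fin n) ℝ :=
    Matrix.of fun i j : Fin n => ∏ t ∈ Finset.Ico ((Fin.rev i : ℕ)) m, (v j + (t:ℕ)) with hQ
  set cRow : Fin n → ℝ :=
    fun i => (-1:ℝ) ^ ((Fin.rev i : ℕ)) * Real.Gamma (w + ((Fin.rev i : ℕ))) with hcRow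
  set cCol : Fin n → ℝ :=
    fun j => Real.Gamma (z (Fin.rev j)) / Real.Gamma (z (Fin.rev j) + w + (m:ℕ)) with hcCol
  have hstep : (N.submatrix Fin.revPerm Fin.revPerm).det
      = (∏ i, cRow i) * ((∏ j, cCol j) * Q.det) := by
    have hsub : N.submatrix Fin.revPerm Fin.revPerm
        = Matrix.of fun i j => cRow i * (Matrix.of fun i' j' => cCol j' * Q i' j') i j := by
      ext i j
      simp only [Matrix.submatrix_apply, hN, Matrix.of_apply, hcRow, hcCol, hQ, hv]
      rw [key (Fin.revPerm i) (Fin.revPerm j)]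
      simp only [Fin.revPerm_apply]
      ring
    rw [hsub, Matrix.det_mul_column, Matrix.det_mul_row]
  rw [hstep]
  -- Step 4 : the polynomial Vandermonde
  have hQdet : Q.det = ∏ i, ∏ j ∈ Finset.Ioi i, (v j - v i) := by
    set p : Fin n → Polynomial ℝ :=
      fun i => ∏ t ∈ Finset.Ico ((Fin.rev i : ℕ)) m, (Polynomial.X + Polynomial.C (t:ℝ)) with hp
    have hdeg : ∀ i : Fin n, (p i).natDegree = (i:ℕ) := by
      intro i
      have h1 : (p i).natDegree
          = ∑ t ∈ Finset.Ico ((Fin.rev i : ℕ)) m, (Polynomial.X + Polynomial.C (t:ℝ)).natDegree := by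
        rw [hp]
        exact Polynomial.natDegree_prod _ _ (fun t _ => Polynomial.X_add_C_ne_zero _)
      rw [h1]
      simp only [Polynomial.natDegree_X_add_C]
      rw [Finset.sum_const, Nat.card_Ico, smul_eq_mul, mul_one, Fin.val_rev]
      have := i.isLt; omega
    have hmonic : ∀ i : Fin n, (p i).Monic :=
      fun i => Polynomial.monic_prod_of_monic _ _ (fun t _ => Polynomial.monic_X_add_C _)
    have hQt : Q.transpose = Matrix.of fun i j => (p j).eval (v i) := by
      ext i j
      simp [hQ, hp, Polynomial.eval_prod]
    rw [← Matrix.det_transpose Q, hQt,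
      ← Matrix.det_eval_matrixOfPolynomials_eq_det_vandermonde v p hdeg hmonic,
      Matrix.det_vandermonde]
  rw [hQdet]
  -- Step 5 : signs and reindexing
  set ε : ℝ := ∏ i : Fin n, (-1:ℝ) ^ ((Fin.rev i : ℕ)) with hε
  have hrow : ∏ i, cRow i = ε * ∏ i : Fin n, Real.Gamma (w + (i:ℕ)) := by
    rw [hcRow, Finset.prod_mul_distrib]
    congr 1
    exact Equiv.prod_comp Fin.revPerm (fun i : Fin n => Real.Gamma (w + (i:ℕ)))
  have hcol : ∏ j, cCol j
      = ∏ j : Fin n, Real.Gamma (z j) / Real.Gamma (z j + w + (m:ℕ)) :=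
    Equiv.prod_comp Fin.revPerm (fun j : Fin n => Real.Gamma (z j) / Real.Gamma (z j + w + (m:ℕ)))
  have hEps : ε * ∏ i, ∏ j ∈ Finset.Ioi i, (v j - v i) = vanDet z := by
    have h1 : ε = ∏ i : Fin n, ∏ _j ∈ Finset.Ioi i, (-1:ℝ) := by
      rw [hε]
      refine Finset.prod_congr rfl fun i _ => ?_
      rw [Finset.prod_const, Fin.card_Ioi, Fin.val_rev]
      congr 1
      omega
    rw [h1, ← Finset.prod_mul_distrib]
    have h2 : ∀ i : Fin n, (∏ _j ∈ Finset.Ioi i, (-1:ℝ)) * ∏ j ∈ Finset.Ioi i, (v j - v i)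
        = ∏ j ∈ Finset.Ioi i, (z (Fin.rev i) - z (Fin.rev j)) := by
      intro i
      rw [← Finset.prod_mul_distrib]
      refine Finset.prod_congr rfl fun j _ => ?_
      rw [hv]
      ring
    rw [Finset.prod_congr rfl fun i _ => h2 i]
    unfold vanDet
    rw [Finset.prod_sigma', Finset.prod_sigma']
    refine Finset.prod_nbij' (fun q => ⟨Fin.rev q.2, Fin.rev q.1⟩)
      (fun q => ⟨Fin.rev q.2, Fin.rev q.1⟩) ?_ ?_ ?_ ?_ ?_ <;>
      simp [Finset.mem_sigma, Finset.mem_Ioi, Fin.rev_lt_rev]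
  -- Step 6 : final assembly
  have hrw : ∀ j : Fin n, z j + w + (n:ℝ) - 1 = z j + w + (m:ℕ) := by
    intro j
    rw [hnm]
    push_cast
    ring
  have htarget : (∏ j : Fin n,
        Real.Gamma (z j) * Real.Gamma (w + (j:ℕ)) / Real.Gamma (z j + w + (n:ℝ) - 1))
      = (∏ i : Fin n, Real.Gamma (w + (i:ℕ)))
        * ∏ j : Fin n, Real.Gamma (z j) / Real.Gamma (z j + w + (m:ℕ)) := by
    rw [← Finset.prod_mul_distrib]
    refine Finset.prod_congr rfl fun j _ => ?_
    rw [hrw j]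
    ring
  rw [htarget, hrow, hcol, ← hEps]
  ring
end

section
/- In an m-dimensional oriented real inner product space W, for vectors v_0, ..., v_{m-2}, the vector u' = ⋆(v_0 ∧ ⋯ ∧ v_{m-2}) satisfies ⟨u', u'⟩ = det(⟨v_i, v_j⟩)_{0 ≤ i,j ≤ m-2}, i.e., its squared norm equals the Gram determinant of v_0, ..., v_{m-2}. -/
open Module
open Matrix

theorem hodge_star_norm_sq_eq_gram_det
    {W : Type*} [NormedAddCommGroup W] [InnerProductSpace ℝ W] [FiniteDimensional ℝ W]
    (k : ℕ) [Fact (finrank ℝ W = k + 1)] (o : Orientation ℝ W (Fin (k + 1)))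
    (v : Fin k → W)
    (u' : W)
    -- `u' = ⋆(v₀ ∧ ⋯ ∧ v_{k-1})`, characterized by `⟨u', w⟩ Ω = v₀ ∧ ⋯ ∧ v_{k-1} ∧ w`:
    (hu' : ∀ w : W, (inner ℝ u' w : ℝ) = o.volumeForm (Fin.snoc v w)) :
    (inner ℝ u' u' : ℝ)
      = Matrix.det (Matrix.of fun i j : Fin k => (inner ℝ (v i) (v j) : ℝ)) := by
  classical
  have hdim : finrank ℝ W = k + 1 := Fact.out
  let b : OrthonormalBasis (Fin (k + 1)) ℝ W :=
    ((stdOrthonormalBasis ℝ W).reindex (finCongr hdim)).adjustToOrientation o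
  have hb : b.toBasis.orientation = o :=
    ((stdOrthonormalBasis ℝ W).reindex (finCongr hdim)).orientation_adjustToOrientation o
  have hvol : o.volumeForm = b.toBasis.det := o.volumeForm_robust b hb
  -- Gram determinant of any (k+1)-family equals the square of the volume form
  have gram_sq : ∀ f : Fin (k + 1) → W,
      Matrix.det (Matrix.of fun i j : Fin (k + 1) => (inner ℝ (f i) (f j) : ℝ))
        = (o.volumeForm f) ^ 2 := by
    intro f
    have hinner : ∀ x y : W, (inner ℝ x y : ℝ) = ∑ l, b.toBasis.repr x l * b.toBasis.repr y l := by
      intro x y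
      rw [← b.repr.inner_map_map x y, PiLp.inner_apply]
      simp [OrthonormalBasis.coe_toBasis_repr_apply, mul_comm]
    have hfac : (Matrix.of fun i j : Fin (k + 1) => (inner ℝ (f i) (f j) : ℝ))
        = (b.toBasis.toMatrix f)ᵀ * b.toBasis.toMatrix f := by
      ext i j
      simp [Matrix.mul_apply, Module.Basis.toMatrix_apply, hinner]
    rw [hfac, Matrix.det_mul, Matrix.det_transpose, hvol, Basis.det_apply, sq]
  set c : ℝ := (inner ℝ u' u' : ℝ) with hc
  set g : ℝ := Matrix.det (Matrix.of fun i j : Fin k => (inner ℝ (v i) (v j) : ℝ)) with hg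
  -- u' is orthogonal to all the v i
  have horth : ∀ j : Fin k, (inner ℝ u' (v j) : ℝ) = 0 := by
    intro j
    rw [hu' (v j)]
    refine o.volumeForm.map_eq_zero_of_eq _ ?_ (Fin.ne_last_of_lt (Fin.castSucc_lt_last j))
    · simp [Fin.snoc_castSucc, Fin.snoc_last]
  -- the Gram determinant of `snoc v u'` is `c * g`
  set f : Fin (k + 1) → W := Fin.snoc v u' with hf
  have hG : Matrix.det (Matrix.of fun i j : Fin (k + 1) =>
      (inner ℝ (f i) (f j) : ℝ)) = c * g := by
    rw [Matrix.det_succ_row _ (Fin.last k)]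
    rw [Finset.sum_eq_single (Fin.last k)]
    · have h1 : ((-1 : ℝ)) ^ ((Fin.last k : ℕ) + (Fin.last k : ℕ)) = 1 :=
        Even.neg_one_pow ⟨k, rfl⟩
      rw [h1, one_mul]
      congr 1
      · simp [hf, Fin.snoc_last, hc]
      · rw [hg]
        congr 1
        ext i j
        simp [hf, Fin.succAbove_last, Fin.snoc_castSucc]
    · intro j _ hj
      obtain ⟨j', rfl⟩ := Fin.exists_castSucc_eq.mpr hj
      have : (inner ℝ (f (Fin.last k)) (f j'.castSucc) : ℝ) = 0 := by
        simp [hf, Fin.snoc_last, Fin.snoc_castSucc, horth]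
      simp [this]
    · simp
  have key : c ^ 2 = c * g := by
    have h1 := gram_sq f
    rw [hG] at h1
    have hcf : c = o.volumeForm f := by rw [hc, hf, hu' u']
    rw [h1, hcf]
  rcases eq_or_ne c 0 with h0 | h0
  · -- then u' = 0, and we must show g = 0
    have hu0 : u' = 0 := by
      have := inner_self_eq_zero (𝕜 := ℝ) (x := u')
      rw [← hc] at this
      exact this.mp h0
    have hzero : ∀ w : W, o.volumeForm (Fin.snoc v w) = 0 := by
      intro w
      rw [← hu' w, hu0, inner_zero_left]
    rw [h0]
    by_contra hgne
    have hgne : g ≠ 0 := fun h => hgne h.symm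
    -- v is linearly independent
    have hv : LinearIndependent ℝ v := by
      rw [Fintype.linearIndependent_iff]
      intro a ha
      have hmv : (Matrix.of fun i j : Fin k => (inner ℝ (v i) (v j) : ℝ)).mulVec a = 0 := by
        ext i
        simp only [Matrix.mulVec, dotProduct, Matrix.of_apply, Pi.zero_apply]
        calc ∑ j, (inner ℝ (v i) (v j) : ℝ) * a j
            = (inner ℝ (v i) (∑ j, a j • v j) : ℝ) := by
              rw [inner_sum]
              simp [real_inner_smul_right, mul_comm]
          _ = 0 := by rw [ha]; simp
      have := Matrix.eq_zero_of_mulVec_eq_zero hgne hmv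
      exact fun i => congrFun this i
    -- v does not span, so we can extend to a basis
    have hspan : Submodule.span ℝ (Set.range v) ≠ ⊤ := by
      intro htop
      have : finrank ℝ W = k := by
        rw [finrank_eq_card_basis (Basis.mk hv htop.ge)]
        simp
      omega
    obtain ⟨w, hw⟩ : ∃ w : W, w ∉ Submodule.span ℝ (Set.range v) := by
      by_contra hwn
      push_neg at hwn
      exact hspan (Submodule.eq_top_iff'.mpr hwn)
    have hsnoc : LinearIndependent ℝ (Fin.snoc v w : Fin (k + 1) → W) :=
      linearIndependent_fin_snoc.mpr ⟨hv, hw⟩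
    have hcard : Fintype.card (Fin (k + 1)) = finrank ℝ W := by simp [hdim]
    let B := basisOfLinearIndependentOfCardEqFinrank hsnoc hcard
    have hB : ⇑B = Fin.snoc v w := coe_basisOfLinearIndependentOfCardEqFinrank hsnoc hcard
    have : o.volumeForm (⇑B) ≠ 0 := by
      rw [hvol]
      exact (b.toBasis.isUnit_det B).ne_zero
    rw [hB] at this
    exact this (hzero w)
  · -- cancel c
    have := key
    rw [sq] at this
    exact mul_left_cancel₀ h0 this
end
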